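/- For every nonzero integer m and every positive integer n, F_{2m} * (sum over k from 1 to n of L_{mk}^4) = F_{2mn+m} (L_{2mn+m} + 4(-1)^{mn} L_m) + (6n-5) F_{2m}. -/

import Mathlib

/-- Fibonacci numbers extended to all integers via `F_{-n} = (-1)^{n-1} F_n`. -/
def fibZ (n : ℤ) : ℤ :=
  if 0 ≤ n then (Nat.fib n.toNat : ℤ) else (-1) ^ ((-n).toNat + 1) * (Nat.fib (-n).toNat : ℤ)

/-- Lucas numbers extended to all integers, `L_n = F_{n-1} + F_{n+1}`. -/
def lucasZ (n : ℤ) : ℤ := fibZ (n - 1) + fibZ (n + 1)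

def sgn (b : ℤ) : ℤ := (((-1 : ℤˣ) ^ b : ℤˣ) : ℤ)

lemma sgn_add (a b : ℤ) : sgn (a + b) = sgn a * sgn b := by
  simp [sgn, zpow_add]

lemma sgn_mul_self (a : ℤ) : sgn a * sgn a = 1 := by
  rw [sgn, ← Units.val_mul, Int.units_mul_self]; rfl

lemma sgn_zero : sgn 0 = 1 := by simp [sgn]

lemma sgn_one : sgn 1 = -1 := by simp [sgn]

lemma sgn_two_mul (a : ℤ) : sgn (2 * a) = 1 := by
  rw [(by ring : 2 * a = a + a), sgn_add, sgn_mul_self]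

lemma fibZ_add_two (n : ℤ) : fibZ (n + 2) = fibZ (n + 1) + fibZ n := by
  rcases le_or_gt 0 n with h | h
  · simp only [fibZ, if_pos (by omega : (0:ℤ) ≤ n + 2), if_pos (by omega : (0:ℤ) ≤ n + 1), if_pos h]
    have : (n + 2).toNat = n.toNat + 2 := by omega
    rw [this, (by omega : (n + 1).toNat = n.toNat + 1), Nat.fib_add_two]
    push_cast; ring
  · rcases (by omega : n = -1 ∨ n = -2 ∨ n ≤ -3) with rfl | rfl | h3
    · norm_num [fibZ]
    · norm_num [fibZ]
      decide
    · obtain ⟨k, rfl⟩ : ∃ k : ℕ, n = -(k + 3) := ⟨(-n-3).toNat, by omega⟩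
      have e1 : (-(k:ℤ) - 3 + 2) = -((k:ℤ)+1) := by ring
      simp only [fibZ, if_neg (by omega : ¬ (0:ℤ) ≤ -((k:ℤ)+3) + 2),
        if_neg (by omega : ¬ (0:ℤ) ≤ -((k:ℤ)+3) + 1), if_neg (by omega : ¬ (0:ℤ) ≤ -((k:ℤ)+3))]
      rw [(by omega : (-(-((k:ℤ)+3) + 2)).toNat = k + 1),
          (by omega : (-(-((k:ℤ)+3) + 1)).toNat = k + 2),
          (by omega : (-(-((k:ℤ)+3))).toNat = k + 3), Nat.fib_add_two (n := k + 1)]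
      push_cast; ring

lemma lucasZ_add_two (n : ℤ) : lucasZ (n + 2) = lucasZ (n + 1) + lucasZ n := by
  have h1 := fibZ_add_two (n + 1)
  have h2 := fibZ_add_two (n - 1)
  simp only [lucasZ]
  ring_nf
  ring_nf at h1 h2
  linarith

lemma fibZ_zero : fibZ 0 = 0 := by norm_num [fibZ]

lemma lucasZ_zero : lucasZ 0 = 2 := by norm_num [lucasZ, fibZ]

lemma lucasZ_one : lucasZ 1 = 1 := by norm_num [lucasZ, fibZ]; decide

lemma sgn_natCast (k : ℕ) : sgn (k : ℤ) = (-1 : ℤ) ^ k := by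
  rw [sgn, zpow_natCast]
  induction k with
  | zero => rfl
  | succ k ih => rw [pow_succ, pow_succ, Units.val_mul, ih]; rfl

lemma fibZ_neg (k : ℕ) : fibZ (-(k : ℤ)) = (-1 : ℤ) ^ (k + 1) * fibZ k := by
  rcases Nat.eq_zero_or_pos k with rfl | hk
  · simp [fibZ]
  · rw [fibZ, if_neg (by omega), fibZ, if_pos (by omega)]
    simp

lemma sgn_succ (a : ℤ) : sgn (a + 1) = -sgn a := by
  rw [sgn_add, sgn_one]; ring

lemma sgn_neg (a : ℤ) : sgn (-a) = sgn a := by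
  have h1 : sgn a * sgn (-a) = 1 := by rw [← sgn_add]; simp [sgn_zero]
  calc sgn (-a) = sgn a * sgn a * sgn (-a) := by rw [sgn_mul_self, one_mul]
    _ = sgn a * (sgn a * sgn (-a)) := by ring
    _ = sgn a := by rw [h1, mul_one]

lemma gen_mul (g : ℤ → ℤ) (hg : ∀ x : ℤ, g (x + 2) = g (x + 1) + g x) (b : ℤ) :
    g 0 * lucasZ b = g b + sgn b * g (-b) := by
  have key : ∀ b : ℤ, (g 0 * lucasZ b = g b + sgn b * g (-b)) ∧
      (g 0 * lucasZ (b + 1) = g (b + 1) + sgn (b + 1) * g (-(b + 1))) := by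
    intro b
    induction b using Int.induction_on with
    | zero =>
      constructor
      · rw [lucasZ_zero, sgn_zero, neg_zero]; ring
      · have h := hg (-1)
        norm_num [lucasZ_one, sgn_one] at h ⊢
        linarith
    | succ i ih =>
      obtain ⟨ih1, ih2⟩ := ih
      refine ⟨ih2, ?_⟩
      have hA : g 0 * lucasZ ((i:ℤ) + 1 + 1) = g 0 * lucasZ ((i:ℤ) + 1) + g 0 * lucasZ i := by
        rw [(by ring : ((i:ℤ) + 1 + 1) = (i:ℤ) + 2), lucasZ_add_two]; ring
      have hB := hg (i:ℤ)
      have hC := hg (-(i:ℤ) - 2)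
      rw [sgn_succ, sgn_succ] at *
      ring_nf at ih1 ih2 hA hB hC ⊢
      have hC2 : sgn (i:ℤ) * g (-(i:ℤ)) = sgn (i:ℤ) * (g (-1 - (i:ℤ)) + g (-2 - (i:ℤ))) := by
        rw [hC]
      ring_nf at hC2
      linarith
    | pred i ih =>
      obtain ⟨ih1, ih2⟩ := ih
      refine ⟨?_, by ring_nf at ih1 ⊢; linarith⟩
      have hA : lucasZ (-(i:ℤ) - 1 + 2) = lucasZ (-(i:ℤ) - 1 + 1) + lucasZ (-(i:ℤ) - 1) :=
        lucasZ_add_two _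
      have hA' : g 0 * lucasZ (-(i:ℤ) - 1 + 2) = g 0 * lucasZ (-(i:ℤ) - 1 + 1) + g 0 * lucasZ (-(i:ℤ) - 1) := by rw [hA]; ring
      have hB := hg (-(i:ℤ) - 1)
      have hC := hg ((i:ℤ) - 1)
      rw [sgn_succ] at *
      have hs : sgn (-(i:ℤ) - 1) = -sgn (-(i:ℤ)) := by
        rw [show -(i:ℤ) - 1 = -((i:ℤ) + 1) by ring, sgn_neg, sgn_succ, sgn_neg]
      rw [hs] at *
      ring_nf at ih1 ih2 hA' hB hC ⊢
      have hC2 : sgn (-(i:ℤ)) * g (1 + (i:ℤ)) = sgn (-(i:ℤ)) * (g (i:ℤ) + g (-1 + (i:ℤ))) := by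
        rw [hC]
      ring_nf at hC2
      linarith
  exact (key b).1

lemma fib_mul_lucas (a b : ℤ) : fibZ a * lucasZ b = fibZ (a + b) + sgn b * fibZ (a - b) := by
  have h := gen_mul (fun x => fibZ (a + x)) (fun x => by
    show fibZ (a + (x + 2)) = fibZ (a + (x + 1)) + fibZ (a + x)
    rw [show a + (x + 2) = a + x + 2 by ring, show a + (x + 1) = a + x + 1 by ring]
    exact fibZ_add_two (a + x)) b
  simp only [add_zero] at h
  rw [show a + -b = a - b by ring] at h
  exact h

lemma lucas_mul_lucas (a b : ℤ) : lucasZ a * lucasZ b = lucasZ (a + b) + sgn b * lucasZ (a - b) := by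
  have h := gen_mul (fun x => lucasZ (a + x)) (fun x => by
    show lucasZ (a + (x + 2)) = lucasZ (a + (x + 1)) + lucasZ (a + x)
    rw [show a + (x + 2) = a + x + 2 by ring, show a + (x + 1) = a + x + 1 by ring]
    exact lucasZ_add_two (a + x)) b
  simp only [add_zero] at h
  rw [show a + -b = a - b by ring] at h
  exact h

lemma fibZ_neg' (a : ℤ) : fibZ (-a) = -(sgn a * fibZ a) := by
  rcases le_or_gt 0 a with h | h
  · lift a to ℕ using h
    rw [fibZ_neg, sgn_natCast, pow_succ]; ring
  · obtain ⟨k, rfl⟩ : ∃ k : ℕ, a = -((k : ℤ) + 1) := ⟨(-a - 1).toNat, by omega⟩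
    rw [neg_neg, show ((k:ℤ) + 1) = ((k+1 : ℕ) : ℤ) by push_cast; ring, fibZ_neg, sgn_neg,
      sgn_natCast]
    have : (-1 : ℤ) ^ (k + 1) * (-1 : ℤ) ^ (k + 1 + 1) = -1 := by
      rw [← pow_add]; exact Odd.neg_one_pow ⟨k + 1, by ring⟩
    linear_combination fibZ ((k + 1 : ℕ) : ℤ) * this

lemma fibZ_neg_even (a : ℤ) : fibZ (-(2 * a)) = -fibZ (2 * a) := by
  rw [fibZ_neg', sgn_two_mul]; ring

lemma sgn_four_mul (m : ℤ) : sgn (4 * m) = 1 := by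
  rw [show (4:ℤ) * m = 2 * (2 * m) by ring]; exact sgn_two_mul _

lemma base_id (m : ℤ) :
    fibZ (2*m) * lucasZ m ^ 4
      = fibZ (3*m) * (lucasZ (3*m) + 4 * sgn m * lucasZ m) + fibZ (2*m) := by
  have h1 := lucas_mul_lucas m m
  rw [show m + m = 2*m by ring, sub_self, lucasZ_zero] at h1
  have h2 := lucas_mul_lucas (2*m) (2*m)
  rw [show 2*m + 2*m = 4*m by ring, sub_self, lucasZ_zero, sgn_two_mul] at h2
  have h3 := fib_mul_lucas (2*m) (4*m)
  rw [show 2*m + 4*m = 6*m by ring, show 2*m - 4*m = -(2*m) by ring, fibZ_neg_even,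
      sgn_four_mul] at h3
  have h4 := fib_mul_lucas (3*m) (3*m)
  rw [show 3*m + 3*m = 6*m by ring, sub_self, fibZ_zero] at h4
  have h5 := fib_mul_lucas (3*m) m
  rw [show 3*m + m = 4*m by ring, show 3*m - m = 2*m by ring] at h5
  have h6 := fib_mul_lucas (2*m) (2*m)
  rw [show 2*m + 2*m = 4*m by ring, sub_self, fibZ_zero, sgn_two_mul] at h6
  linear_combination (fibZ (2*m) * (lucasZ m * lucasZ m + lucasZ (2*m) + 2 * sgn m)) * h1
    + fibZ (2*m) * h2 + h3 + 4 * sgn m * h6 - h4 - 4 * sgn m * h5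

lemma step_id (m j : ℤ) :
    fibZ (2*m) * lucasZ j ^ 4
        + fibZ (2*j - m) * (lucasZ (2*j - m) + 4 * (sgn j * sgn m) * lucasZ m)
      = fibZ (2*j + m) * (lucasZ (2*j + m) + 4 * sgn j * lucasZ m) + 6 * fibZ (2*m) := by
  have h1 := lucas_mul_lucas j j
  rw [show j + j = 2*j by ring, sub_self, lucasZ_zero] at h1
  have h2 := lucas_mul_lucas (2*j) (2*j)
  rw [show 2*j + 2*j = 4*j by ring, sub_self, lucasZ_zero, sgn_two_mul] at h2
  have h3 := fib_mul_lucas (2*m) (4*j)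
  rw [show 2*m + 4*j = 4*j + 2*m by ring, show 2*m - 4*j = -(2*(2*j - m)) by ring,
      fibZ_neg_even, show (2:ℤ)*(2*j - m) = 4*j - 2*m by ring, sgn_four_mul] at h3
  have h4 := fib_mul_lucas (2*j + m) (2*j + m)
  rw [show 2*j + m + (2*j + m) = 4*j + 2*m by ring, sub_self, fibZ_zero] at h4
  have h5 := fib_mul_lucas (2*j - m) (2*j - m)
  rw [show 2*j - m + (2*j - m) = 4*j - 2*m by ring, sub_self, fibZ_zero] at h5
  have h6 := fib_mul_lucas (2*j + m) m
  rw [show 2*j + m + m = 2*j + 2*m by ring, show 2*j + m - m = 2*j by ring] at h6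
  have h7 := fib_mul_lucas (2*j - m) m
  rw [show 2*j - m + m = 2*j by ring, show 2*j - m - m = 2*j - 2*m by ring] at h7
  have h8 := fib_mul_lucas (2*m) (2*j)
  rw [show 2*m + 2*j = 2*j + 2*m by ring, show 2*m - 2*j = -(2*(j - m)) by ring,
      fibZ_neg_even, show (2:ℤ)*(j - m) = 2*j - 2*m by ring, sgn_two_mul] at h8
  have hsj := sgn_mul_self j
  have hsm := sgn_mul_self m
  linear_combination (fibZ (2*m) * (lucasZ j * lucasZ j + lucasZ (2*j) + 2 * sgn j)) * h1
    + fibZ (2*m) * h2 + h3 + 4 * sgn j * h8 + h5 - h4 + 4 * sgn j * sgn m * h7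
    - 4 * sgn j * h6 + 4 * fibZ (2*m) * hsj + 4 * sgn j * fibZ (2*j - 2*m) * hsm

theorem stmt10 (m : ℤ) (hm : m ≠ 0) (n : ℕ) (hn : 0 < n) :
    fibZ (2 * m) * ∑ k ∈ Finset.Icc 1 n, lucasZ (m * k) ^ 4
      = fibZ (2 * m * n + m) * (lucasZ (2 * m * n + m) + 4 * ((((-1 : ℤˣ) ^ (m * n) : ℤˣ)) : ℤ) * lucasZ m)
        + (6 * n - 5) * fibZ (2 * m) := by
  have hcast : ∀ b : ℤ, (((-1 : ℤˣ) ^ b : ℤˣ) : ℤ) = sgn b := fun _ => rfl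
  rw [hcast]
  induction n, hn using Nat.le_induction with
  | base =>
    simp only [Finset.Icc_self, Finset.sum_singleton, Nat.cast_one]
    have hb := base_id m
    ring_nf at hb ⊢
    linear_combination hb
  | succ n hn ih =>
    rw [Finset.sum_Icc_succ_top (by omega : 1 ≤ n + 1)]
    have hstep := step_id m (m * ((n:ℤ) + 1))
    rw [show 2 * (m * ((n:ℤ) + 1)) - m = 2 * m * (n:ℤ) + m by ring,
        show 2 * (m * ((n:ℤ) + 1)) + m = 2 * m * ((n:ℤ) + 1) + m by ring] at hstep
    have hs : sgn (m * (n:ℤ)) = sgn (m * ((n:ℤ) + 1)) * sgn m := by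
      rw [show m * ((n:ℤ) + 1) = m * (n:ℤ) + m by ring, sgn_add, mul_assoc, sgn_mul_self,
        mul_one]
    rw [hs] at ih
    push_cast
    ring_nf at ih hstep ⊢
    linear_combination ih + hstep
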